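/- For any filling σ of the column diagram of a composition μ, the number of inversion triples of the augmented filling equals inv(σ̂) := |Inv(σ̂)| − |{(i,j) : i < j, μ_i ≤ μ_j}| − Σ_{u ∈ Des(σ̂)} a(u). -/
import Mathlib


open Finset

noncomputable section
attribute [local instance] Classical.propDecidable

/-- `u` lies in the column diagram of the composition `μ` (columns `1,…,n`). -/
def dgIn (n : ℕ) (μ : ℕ → ℕ) (u : ℕ × ℕ) : Prop :=
  1 ≤ u.1 ∧ u.1 ≤ n ∧ 1 ≤ u.2 ∧ u.2 ≤ μ u.1

/-- `u` lies in the augmented diagram of `μ` (row `0` added). -/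
def augIn (n : ℕ) (μ : ℕ → ℕ) (u : ℕ × ℕ) : Prop :=
  1 ≤ u.1 ∧ u.1 ≤ n ∧ u.2 ≤ μ u.1

/-- The column diagram of `μ` as a finite set. -/
def dgF (n : ℕ) (μ : ℕ → ℕ) : Finset (ℕ × ℕ) :=
  (Finset.Icc 1 n).biUnion (fun i => (Finset.Icc 1 (μ i)).image (fun j => (i, j)))

/-- The augmented diagram of `μ` as a finite set. -/
def augF (n : ℕ) (μ : ℕ → ℕ) : Finset (ℕ × ℕ) :=
  (Finset.Icc 1 n).biUnion (fun i => (Finset.Icc 0 (μ i)).image (fun j => (i, j)))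

/-- The box directly below `u`. -/
def dbox (u : ℕ × ℕ) : ℕ × ℕ := (u.1, u.2 - 1)

/-- `v` belongs to the arm of `u` (left arm or right arm). -/
def armIn (n : ℕ) (μ : ℕ → ℕ) (u v : ℕ × ℕ) : Prop :=
  (dgIn n μ v ∧ v.2 = u.2 ∧ v.1 < u.1 ∧ μ v.1 ≤ μ u.1) ∨
  (augIn n μ v ∧ v.2 + 1 = u.2 ∧ u.1 < v.1 ∧ μ v.1 < μ u.1)

/-- The arm of `u` as a finite set. -/
def armF (n : ℕ) (μ : ℕ → ℕ) (u : ℕ × ℕ) : Finset (ℕ × ℕ) :=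
  (augF n μ).filter (fun v => armIn n μ u v)

/-- The leg length `l(u) = μ_i - j`. -/
def legLen (μ : ℕ → ℕ) (u : ℕ × ℕ) : ℕ := μ u.1 - u.2

/-- The arm length `a(u) = |arm(u)|`. -/
def armLen (n : ℕ) (μ : ℕ → ℕ) (u : ℕ × ℕ) : ℕ := (armF n μ u).card

/-- Two distinct boxes attack each other: same row, or consecutive rows with
the lower box strictly to the right. -/
def attacks (u v : ℕ × ℕ) : Prop :=
  u ≠ v ∧ (u.2 = v.2 ∨ (u.2 = v.2 + 1 ∧ u.1 < v.1) ∨ (v.2 = u.2 + 1 ∧ v.1 < u.1))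

/-- Reading order: rows top to bottom, right to left within a row. -/
def rlt (u v : ℕ × ℕ) : Prop := v.2 < u.2 ∨ (u.2 = v.2 ∧ v.1 < u.1)

/-- The augmented filling: value `i` in the row-0 box `(i,0)`. -/
def augOf (σ : ℕ × ℕ → ℕ) : ℕ × ℕ → ℕ := fun u => if u.2 = 0 then u.1 else σ u

/-- The (augmented) filling is non-attacking. -/
def NonAttacking (n : ℕ) (μ : ℕ → ℕ) (σh : ℕ × ℕ → ℕ) : Prop :=
  ∀ u v : ℕ × ℕ, augIn n μ u → augIn n μ v → attacks u v → σh u ≠ σh v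

/-- The set of inversions of an augmented filling: attacking pairs,
earlier box (in reading order) having the larger entry. -/
def invF (n : ℕ) (μ : ℕ → ℕ) (σh : ℕ × ℕ → ℕ) : Finset ((ℕ × ℕ) × (ℕ × ℕ)) :=
  ((augF n μ) ×ˢ (augF n μ)).filter
    (fun p => attacks p.1 p.2 ∧ rlt p.1 p.2 ∧ σh p.2 < σh p.1)

/-- The descent set of an augmented filling. -/
def desF (n : ℕ) (μ : ℕ → ℕ) (σh : ℕ × ℕ → ℕ) : Finset (ℕ × ℕ) :=
  (dgF n μ).filter (fun u => σh (dbox u) < σh u)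

/-- maj = sum of `l(u)+1` over descents. -/
def majStat (n : ℕ) (μ : ℕ → ℕ) (σh : ℕ × ℕ → ℕ) : ℕ :=
  ∑ u ∈ desF n μ σh, (legLen μ u + 1)

/-- `χ_{xy} = 1` iff the earlier box in reading order carries the larger entry. -/
def chi (σh : ℕ × ℕ → ℕ) (x y : ℕ × ℕ) : ℕ :=
  if (rlt x y ∧ σh y < σh x) ∨ (rlt y x ∧ σh x < σh y) then 1 else 0

/-- Triples `(u, v, d(u))`, encoded by the pair `(u, v)` with `v ∈ arm(u)`. -/
def triplesF (n : ℕ) (μ : ℕ → ℕ) : Finset ((ℕ × ℕ) × (ℕ × ℕ)) :=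
  ((dgF n μ) ×ˢ (augF n μ)).filter (fun p => armIn n μ p.1 p.2)

/-- Inversion triples: `χ_{uv} + χ_{vw} - χ_{uw} = 1` where `w = d(u)`. -/
def invTriplesF (n : ℕ) (μ : ℕ → ℕ) (σh : ℕ × ℕ → ℕ) : Finset ((ℕ × ℕ) × (ℕ × ℕ)) :=
  (triplesF n μ).filter
    (fun p => chi σh p.1 p.2 + chi σh p.2 (dbox p.1) = chi σh p.1 (dbox p.1) + 1)

/-- Co-inversion triples: `χ_{uv} + χ_{vw} - χ_{uw} = 0` where `w = d(u)`. -/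
def coinvTriplesF (n : ℕ) (μ : ℕ → ℕ) (σh : ℕ × ℕ → ℕ) : Finset ((ℕ × ℕ) × (ℕ × ℕ)) :=
  (triplesF n μ).filter
    (fun p => chi σh p.1 p.2 + chi σh p.2 (dbox p.1) = chi σh p.1 (dbox p.1))

/-- coinv = number of co-inversion triples. -/
def coinvStat (n : ℕ) (μ : ℕ → ℕ) (σh : ℕ × ℕ → ℕ) : ℕ := (coinvTriplesF n μ σh).card

/-- `σ` is a filling of `μ`, i.e. takes values in `[n]` on the diagram. -/
def IsFilling (n : ℕ) (μ : ℕ → ℕ) (σ : ℕ × ℕ → ℕ) : Prop :=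
  ∀ u : ℕ × ℕ, dgIn n μ u → 1 ≤ σ u ∧ σ u ≤ n
/-! ### Auxiliary material -/

lemma mem_dgF {n : ℕ} {μ : ℕ → ℕ} {u : ℕ × ℕ} : u ∈ dgF n μ ↔ dgIn n μ u := by
  unfold dgF dgIn
  simp only [Finset.mem_biUnion, Finset.mem_image, Finset.mem_Icc]
  constructor
  · rintro ⟨i, ⟨h1, h2⟩, j, ⟨h3, h4⟩, rfl⟩
    exact ⟨h1, h2, h3, h4⟩
  · rintro ⟨h1, h2, h3, h4⟩
    exact ⟨u.1, ⟨h1, h2⟩, u.2, ⟨h3, h4⟩, rfl⟩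

lemma mem_augF {n : ℕ} {μ : ℕ → ℕ} {u : ℕ × ℕ} : u ∈ augF n μ ↔ augIn n μ u := by
  unfold augF augIn
  simp only [Finset.mem_biUnion, Finset.mem_image, Finset.mem_Icc]
  constructor
  · rintro ⟨i, ⟨h1, h2⟩, j, ⟨h3, h4⟩, rfl⟩
    exact ⟨h1, h2, h4⟩
  · rintro ⟨h1, h2, h3⟩
    exact ⟨u.1, ⟨h1, h2⟩, u.2, ⟨Nat.zero_le _, h3⟩, rfl⟩

lemma rlt_asymm {u v : ℕ × ℕ} (h : rlt u v) : ¬ rlt v u := by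
  unfold rlt at *; omega

lemma chi_of_rlt (σh : ℕ × ℕ → ℕ) {x y : ℕ × ℕ} (h : rlt x y) :
    chi σh x y = if σh y < σh x then 1 else 0 := by
  have h2 := rlt_asymm h
  unfold chi
  by_cases hc : σh y < σh x <;> simp [h, h2, hc]

/-- The set of attacking pairs, in reading order. -/
def apF (n : ℕ) (μ : ℕ → ℕ) : Finset ((ℕ × ℕ) × (ℕ × ℕ)) :=
  ((augF n μ) ×ˢ (augF n μ)).filter (fun p => attacks p.1 p.2 ∧ rlt p.1 p.2)

/-- Leftover attacking pairs (row 0, weakly increasing μ). -/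
def lF (n : ℕ) (μ : ℕ → ℕ) : Finset ((ℕ × ℕ) × (ℕ × ℕ)) :=
  (apF n μ).filter (fun q => q.1.2 = 0 ∧ μ q.2.1 ≤ μ q.1.1)

/-- Second attacking pair associated to a triple. -/
def f2 (p : (ℕ × ℕ) × (ℕ × ℕ)) : (ℕ × ℕ) × (ℕ × ℕ) := (p.2, dbox p.1)

lemma mem_apF {n : ℕ} {μ : ℕ → ℕ} {q : (ℕ × ℕ) × (ℕ × ℕ)} :
    q ∈ apF n μ ↔ (augIn n μ q.1 ∧ augIn n μ q.2) ∧ attacks q.1 q.2 ∧ rlt q.1 q.2 := by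
  unfold apF
  rw [Finset.mem_filter, Finset.mem_product, mem_augF, mem_augF]

lemma mem_triplesF {n : ℕ} {μ : ℕ → ℕ} {p : (ℕ × ℕ) × (ℕ × ℕ)} :
    p ∈ triplesF n μ ↔ (dgIn n μ p.1 ∧ augIn n μ p.2) ∧ armIn n μ p.1 p.2 := by
  unfold triplesF
  rw [Finset.mem_filter, Finset.mem_product, mem_dgF, mem_augF]

lemma apF_eq (n : ℕ) (μ : ℕ → ℕ) :
    apF n μ = ((triplesF n μ) ∪ (triplesF n μ).image f2) ∪ lF n μ := by
  ext q
  obtain ⟨⟨u1, u2⟩, v1, v2⟩ := q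
  simp only [Finset.mem_union, Finset.mem_image, mem_apF, mem_triplesF, lF, Finset.mem_filter,
    augIn, dgIn, armIn, attacks, rlt, dbox, f2, ne_eq, Prod.mk.injEq, Prod.ext_iff, not_and]
  constructor
  · rintro ⟨⟨hu, hv⟩, hat, hr⟩
    by_cases hrow : u2 = v2
    · by_cases hμ : μ v1 ≤ μ u1
      · by_cases h0 : u2 = 0
        · exact Or.inr ⟨⟨⟨hu, hv⟩, hat, hr⟩, h0, hμ⟩
        · refine Or.inl (Or.inl ?_)
          omega
      · refine Or.inl (Or.inr ⟨((v1, u2 + 1), (u1, u2)), ?_, ?_⟩) <;>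
          · dsimp only
            omega
    · by_cases hμ : μ v1 < μ u1
      · refine Or.inl (Or.inl ?_)
        omega
      · refine Or.inl (Or.inr ⟨((v1, v2 + 1), (u1, u2)), ?_, ?_⟩) <;>
          · dsimp only
            omega
  · rintro ((h | ⟨⟨⟨a1, a2⟩, b1, b2⟩, hp, hfp⟩) | hL)
    · omega
    · simp only [Prod.ext_iff, Prod.mk.injEq] at hfp
      dsimp only at hp hfp
      obtain ⟨⟨rfl, rfl⟩, rfl, rfl⟩ := hfp
      omega
    · exact hL.1

lemma f2_injOn (n : ℕ) (μ : ℕ → ℕ) :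
    ∀ p ∈ triplesF n μ, ∀ p' ∈ triplesF n μ, f2 p = f2 p' → p = p' := by
  rintro ⟨⟨a1, a2⟩, b1, b2⟩ hp ⟨⟨c1, c2⟩, d1, d2⟩ hp' hf
  simp only [mem_triplesF, dgIn, augIn, armIn, f2, dbox, Prod.mk.injEq] at hp hp' hf ⊢
  omega

lemma disj1 (n : ℕ) (μ : ℕ → ℕ) :
    Disjoint (triplesF n μ) ((triplesF n μ).image f2) := by
  rw [Finset.disjoint_left]
  rintro q hq hq'
  obtain ⟨p, hp, rfl⟩ := Finset.mem_image.mp hq'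
  obtain ⟨⟨a1, a2⟩, b1, b2⟩ := p
  simp only [mem_triplesF, dgIn, augIn, armIn, f2, dbox, Prod.mk.injEq] at hq hp
  omega

lemma disj2 (n : ℕ) (μ : ℕ → ℕ) :
    Disjoint ((triplesF n μ) ∪ (triplesF n μ).image f2) (lF n μ) := by
  rw [Finset.disjoint_left]
  rintro q hq hq'
  rw [Finset.mem_union] at hq
  rcases hq with hq | hq
  · simp only [mem_triplesF, dgIn, augIn, armIn, lF, Finset.mem_filter] at hq hq'
    omega
  · obtain ⟨p, hp, rfl⟩ := Finset.mem_image.mp hq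
    obtain ⟨⟨a1, a2⟩, b1, b2⟩ := p
    simp only [mem_triplesF, dgIn, augIn, armIn, lF, Finset.mem_filter, f2, dbox] at hp hq'
    omega

lemma sum_lF_card (n : ℕ) (μ : ℕ → ℕ) (σ : ℕ × ℕ → ℕ) :
    ∑ q ∈ lF n μ, chi (augOf σ) q.1 q.2 = (lF n μ).card := by
  rw [Finset.card_eq_sum_ones]
  refine Finset.sum_congr rfl fun q hq => ?_
  have hq' := hq
  simp only [lF, Finset.mem_filter, mem_apF] at hq'
  obtain ⟨⟨_, _, hr⟩, h0, _⟩ := hq'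
  rw [chi_of_rlt _ hr]
  have h22 : q.2.2 = 0 ∧ q.2.1 < q.1.1 := by unfold rlt at hr; omega
  have : augOf σ q.1 = q.1.1 := by simp [augOf, h0]
  have h2 : augOf σ q.2 = q.2.1 := by simp [augOf, h22.1]
  rw [this, h2, if_pos h22.2]

lemma lF_card (n : ℕ) (μ : ℕ → ℕ) :
    (lF n μ).card = (((Finset.Icc 1 n) ×ˢ (Finset.Icc 1 n)).filter
      (fun p => p.1 < p.2 ∧ μ p.1 ≤ μ p.2)).card := by
  refine Finset.card_bij' (fun q _ => (q.2.1, q.1.1)) (fun p _ => ((p.2, 0), (p.1, 0)))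
    ?_ ?_ ?_ ?_
  · rintro ⟨⟨u1, u2⟩, v1, v2⟩ hq
    simp only [lF, Finset.mem_filter, mem_apF, augIn, attacks, rlt] at hq
    simp only [Finset.mem_filter, Finset.mem_product, Finset.mem_Icc]
    omega
  · rintro ⟨i, j⟩ hp
    simp only [Finset.mem_filter, Finset.mem_product, Finset.mem_Icc] at hp
    simp only [lF, Finset.mem_filter, mem_apF, augIn, attacks, rlt, ne_eq, Prod.mk.injEq,
      not_and, not_true, true_and, and_true, true_or, or_true, le_refl, imp_false]
    omega
  · rintro ⟨⟨u1, u2⟩, v1, v2⟩ hq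
    simp only [lF, Finset.mem_filter, mem_apF, augIn, attacks, rlt] at hq
    simp only [Prod.mk.injEq, true_and, and_true]
    omega
  · rintro ⟨i, j⟩ hp
    rfl

lemma sum_triples_eq {M : Type*} [AddCommMonoid M] (n : ℕ) (μ : ℕ → ℕ)
    (g : (ℕ × ℕ) × (ℕ × ℕ) → M) :
    ∑ p ∈ triplesF n μ, g p = ∑ u ∈ dgF n μ, ∑ v ∈ armF n μ u, g (u, v) := by
  unfold triplesF
  rw [Finset.sum_filter, Finset.sum_product]
  refine Finset.sum_congr rfl fun u _ => ?_
  unfold armF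
  rw [Finset.sum_filter]

lemma sum_chi_uw (n : ℕ) (μ : ℕ → ℕ) (σh : ℕ × ℕ → ℕ) :
    ∑ p ∈ triplesF n μ, chi σh p.1 (dbox p.1) = ∑ u ∈ desF n μ σh, armLen n μ u := by
  rw [sum_triples_eq]
  have h1 : ∀ u ∈ dgF n μ, ∑ _v ∈ armF n μ u, chi σh u (dbox u)
      = if σh (dbox u) < σh u then armLen n μ u else 0 := by
    intro u hu
    have hr : rlt u (dbox u) := by
      have := mem_dgF.mp hu
      unfold dgIn at this
      unfold rlt dbox
      omega
    rw [Finset.sum_const, chi_of_rlt _ hr]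
    by_cases hc : σh (dbox u) < σh u <;> simp [hc, armLen]
  rw [Finset.sum_congr rfl h1, ← Finset.sum_filter]
  rfl

lemma inv_card_eq (n : ℕ) (μ : ℕ → ℕ) (σ : ℕ × ℕ → ℕ) :
    (invF n μ (augOf σ)).card =
      (∑ p ∈ triplesF n μ, chi (augOf σ) p.1 p.2) +
      (∑ p ∈ triplesF n μ, chi (augOf σ) p.2 (dbox p.1)) +
      (((Finset.Icc 1 n) ×ˢ (Finset.Icc 1 n)).filter
        (fun p => p.1 < p.2 ∧ μ p.1 ≤ μ p.2)).card := by
  set σh := augOf σ with hσh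
  have h1 : invF n μ σh = (apF n μ).filter (fun q => σh q.2 < σh q.1) := by
    unfold invF apF
    rw [Finset.filter_filter]
    apply Finset.filter_congr
    intro q _
    simp [and_assoc]
  have h2 : (invF n μ σh).card = ∑ q ∈ apF n μ, chi σh q.1 q.2 := by
    rw [h1, Finset.card_filter]
    refine Finset.sum_congr rfl fun q hq => ?_
    have hr : rlt q.1 q.2 := (mem_apF.mp hq).2.2
    rw [chi_of_rlt _ hr]
  rw [h2, apF_eq n μ, Finset.sum_union (disj2 n μ), Finset.sum_union (disj1 n μ),
    Finset.sum_image (f2_injOn n μ)]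
  have h3 : ∑ p ∈ triplesF n μ, chi σh (f2 p).1 (f2 p).2
      = ∑ p ∈ triplesF n μ, chi σh p.2 (dbox p.1) := rfl
  rw [h3, sum_lF_card n μ σ, lF_card n μ]

lemma chi_triple_rlt {n : ℕ} {μ : ℕ → ℕ} {p : (ℕ × ℕ) × (ℕ × ℕ)} (hp : p ∈ triplesF n μ) :
    rlt p.1 p.2 ∧ rlt p.2 (dbox p.1) ∧ rlt p.1 (dbox p.1) := by
  obtain ⟨⟨hu, hv⟩, harm⟩ := mem_triplesF.mp hp
  unfold dgIn augIn armIn dgIn augIn rlt dbox at *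
  omega

lemma invTriples_card_aux (n : ℕ) (μ : ℕ → ℕ) (σh : ℕ × ℕ → ℕ) :
    ((invTriplesF n μ σh).card : ℤ) =
      (∑ p ∈ triplesF n μ, (chi σh p.1 p.2 : ℤ)) +
      (∑ p ∈ triplesF n μ, (chi σh p.2 (dbox p.1) : ℤ)) -
      (∑ p ∈ triplesF n μ, (chi σh p.1 (dbox p.1) : ℤ)) := by
  have h1 : ((invTriplesF n μ σh).card : ℤ)
      = ∑ p ∈ triplesF n μ, (if chi σh p.1 p.2 + chi σh p.2 (dbox p.1)
          = chi σh p.1 (dbox p.1) + 1 then (1 : ℤ) else 0) := by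
    unfold invTriplesF
    rw [Finset.card_filter]
    push_cast
    refine Finset.sum_congr rfl fun p _ => ?_
    split <;> simp
  rw [h1, ← Finset.sum_add_distrib, ← Finset.sum_sub_distrib]
  refine Finset.sum_congr rfl fun p hp => ?_
  obtain ⟨h1', h2', h3'⟩ := chi_triple_rlt hp
  rw [chi_of_rlt _ h1', chi_of_rlt _ h2', chi_of_rlt _ h3']
  by_cases a1 : σh p.2 < σh p.1 <;> by_cases a2 : σh (dbox p.1) < σh p.2 <;>
    by_cases a3 : σh (dbox p.1) < σh p.1 <;> simp [a1, a2, a3] <;> omega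

/-- for any filling `σ` of the column diagram of `μ`, the number of
inversion triples of the augmented filling equals
`|Inv(σ̂)| - |{i<j : μ_i ≤ μ_j}| - Σ_{u ∈ Des(σ̂)} a(u)`. -/
theorem invTriples_card_eq (n : ℕ) (μ : ℕ → ℕ) (σ : ℕ × ℕ → ℕ)
    (hσ : IsFilling n μ σ) :
    ((invTriplesF n μ (augOf σ)).card : ℤ) =
      ((invF n μ (augOf σ)).card : ℤ) -
        (((Finset.Icc 1 n) ×ˢ (Finset.Icc 1 n)).filter
            (fun p => p.1 < p.2 ∧ μ p.1 ≤ μ p.2)).card -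
        ∑ u ∈ desF n μ (augOf σ), (armLen n μ u : ℤ) := by

  have hA := invTriples_card_aux n μ (augOf σ)
  have hB := sum_chi_uw n μ (augOf σ)
  have hC := inv_card_eq n μ σ
  have hc1 : ∑ p ∈ triplesF n μ, (chi (augOf σ) p.1 p.2 : ℤ)
      = ((∑ p ∈ triplesF n μ, chi (augOf σ) p.1 p.2 : ℕ) : ℤ) := (Nat.cast_sum _ _).symm
  have hc2 : ∑ p ∈ triplesF n μ, (chi (augOf σ) p.2 (dbox p.1) : ℤ)
      = ((∑ p ∈ triplesF n μ, chi (augOf σ) p.2 (dbox p.1) : ℕ) : ℤ) := (Nat.cast_sum _ _).symm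
  have hc3 : ∑ p ∈ triplesF n μ, (chi (augOf σ) p.1 (dbox p.1) : ℤ)
      = ((∑ p ∈ triplesF n μ, chi (augOf σ) p.1 (dbox p.1) : ℕ) : ℤ) := (Nat.cast_sum _ _).symm
  have hc4 : ∑ u ∈ desF n μ (augOf σ), (armLen n μ u : ℤ)
      = ((∑ u ∈ desF n μ (augOf σ), armLen n μ u : ℕ) : ℤ) := (Nat.cast_sum _ _).symm
  rw [hc1, hc2, hc3] at hA
  rw [hc4]
  omega
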